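/- Let n ≥ 2 and let X, X' ∈ ([0,1]^d)ⁿ be neighboring datasets (differing in exactly one column), with centered covariance matrices M and M' respectively. Then for every pair of indices (i, j), |M_ij − M'_ij| ≤ 6/n; consequently Σ_{i,j} |M_ij − M'_ij| ≤ 6d²/n. -/
import Mathlib


open MeasureTheory Matrix
open scoped ENNReal

/-- Two datasets are neighboring if they differ in at most one column. -/
def neighbors {n : ℕ} {α : Type*} (X X' : Fin n → α) : Prop :=
  ∃ k, ∀ i, i ≠ k → X i = X' i

/-- The mean vector of a dataset. -/
noncomputable def meanVec {n d : ℕ} (X : Fin n → Fin d → ℝ) : Fin d → ℝ :=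
  fun j => (∑ i, X i j) / n

/-- The centered covariance matrix (as a function of its entries). -/
noncomputable def covFn {n d : ℕ} (X : Fin n → Fin d → ℝ) : Fin d → Fin d → ℝ :=
  fun a b => (∑ i, (X i a - meanVec X a) * (X i b - meanVec X b)) / ((n : ℝ) - 1)

lemma covFn_eq {n d : ℕ} (hn : 1 ≤ n) (X : Fin n → Fin d → ℝ) (a b : Fin d) :
    covFn X a b = ((∑ i, X i a * X i b) - (∑ i, X i a) * (∑ i, X i b) / n) / ((n : ℝ) - 1) := by
  have hn0 : (n : ℝ) ≠ 0 := by positivity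
  simp only [covFn, meanVec]
  congr 1
  have : ∀ i : Fin n, (X i a - (∑ j, X j a) / n) * (X i b - (∑ j, X j b) / n)
      = X i a * X i b - ((∑ j, X j a) / n) * X i b - X i a * ((∑ j, X j b) / n)
        + ((∑ j, X j a) / n) * ((∑ j, X j b) / n) := by intro i; ring
  rw [Finset.sum_congr rfl (fun i _ => this i)]
  rw [Finset.sum_add_distrib, Finset.sum_sub_distrib, Finset.sum_sub_distrib,
    ← Finset.mul_sum, ← Finset.sum_mul, Finset.sum_const, Finset.card_univ, Fintype.card_fin,
    nsmul_eq_mul]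
  field_simp
  ring

theorem stmt_1 (d n : ℕ) (hn : 2 ≤ n) (X X' : Fin n → Fin d → ℝ)
    (hX : ∀ i j, X i j ∈ Set.Icc (0 : ℝ) 1) (hX' : ∀ i j, X' i j ∈ Set.Icc (0 : ℝ) 1)
    (hXX' : neighbors X X') :
    (∀ a b, |covFn X a b - covFn X' a b| ≤ 6 / n) ∧
      (∑ a, ∑ b, |covFn X a b - covFn X' a b|) ≤ 6 * d ^ 2 / n := by
  obtain ⟨k, hk⟩ := hXX'
  have hn1 : 1 ≤ n := le_trans (by norm_num) hn
  have hnR : (2 : ℝ) ≤ n := by exact_mod_cast hn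
  have hn0 : (0 : ℝ) < n := by linarith
  have hn1R : (0 : ℝ) < (n : ℝ) - 1 := by linarith
  have main : ∀ a b, |covFn X a b - covFn X' a b| ≤ 6 / n := by
    intro a b
    set P := ∑ i, X i a * X i b with hP
    set Q := ∑ i, X' i a * X' i b with hQ
    set Sa := ∑ i, X i a with hSa
    set Sb := ∑ i, X i b with hSb
    set Ta := ∑ i, X' i a with hTa
    set Tb := ∑ i, X' i b with hTb
    -- single-index difference sums
    have hdiff : ∀ (f g : Fin n → ℝ), (∀ i, i ≠ k → f i = g i) →
        (∑ i, f i) - (∑ i, g i) = f k - g k := by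
      intro f g h
      rw [← Finset.sum_sub_distrib]
      rw [Fintype.sum_eq_single k]
      intro i hi
      rw [h i hi]; ring
    have hPQ : |P - Q| ≤ 1 := by
      rw [hdiff _ _ (fun i hi => by rw [hk i hi])]
      have h1 := hX k a; have h2 := hX k b
      have h3 := hX' k a; have h4 := hX' k b
      simp only [Set.mem_Icc] at h1 h2 h3 h4
      rw [abs_le]
      constructor <;> nlinarith
    have hSaTa : |Sa - Ta| ≤ 1 := by
      rw [hdiff _ _ (fun i hi => by rw [hk i hi])]
      have h1 := hX k a; have h3 := hX' k a
      simp only [Set.mem_Icc] at h1 h3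
      rw [abs_le]; constructor <;> linarith
    have hSbTb : |Sb - Tb| ≤ 1 := by
      rw [hdiff _ _ (fun i hi => by rw [hk i hi])]
      have h1 := hX k b; have h3 := hX' k b
      simp only [Set.mem_Icc] at h1 h3
      rw [abs_le]; constructor <;> linarith
    have hbound : ∀ (Y : Fin n → Fin d → ℝ), (∀ i j, Y i j ∈ Set.Icc (0:ℝ) 1) →
        ∀ c, |∑ i, Y i c| ≤ n := by
      intro Y hY c
      calc |∑ i, Y i c| ≤ ∑ i, |Y i c| := Finset.abs_sum_le_sum_abs _ _
        _ ≤ ∑ _i : Fin n, (1 : ℝ) := by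
            apply Finset.sum_le_sum
            intro i _
            have := hY i c
            simp only [Set.mem_Icc] at this
            rw [abs_le]; constructor <;> linarith [this.1, this.2]
        _ = n := by simp
    have hSbB : |Sb| ≤ n := hbound X hX b
    have hTaB : |Ta| ≤ n := hbound X' hX' a
    have key : covFn X a b - covFn X' a b
        = ((P - Q) - ((Sa - Ta) * Sb + Ta * (Sb - Tb)) / n) / ((n : ℝ) - 1) := by
      rw [covFn_eq hn1 X a b, covFn_eq hn1 X' a b, ← hP, ← hQ, ← hSa, ← hSb, ← hTa, ← hTb]
      field_simp
      ring
    rw [key, abs_div, abs_of_pos hn1R]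
    have hnum : |(P - Q) - ((Sa - Ta) * Sb + Ta * (Sb - Tb)) / n| ≤ 3 := by
      have h1 : |((Sa - Ta) * Sb + Ta * (Sb - Tb)) / n| ≤ 2 := by
        rw [abs_div, abs_of_pos hn0, div_le_iff₀ hn0]
        calc |(Sa - Ta) * Sb + Ta * (Sb - Tb)|
            ≤ |(Sa - Ta) * Sb| + |Ta * (Sb - Tb)| := abs_add_le _ _
          _ = |Sa - Ta| * |Sb| + |Ta| * |Sb - Tb| := by rw [abs_mul, abs_mul]
          _ ≤ 1 * n + n * 1 := by
              gcongr <;> first | positivity | assumption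
          _ = 2 * n := by ring
      calc |(P - Q) - ((Sa - Ta) * Sb + Ta * (Sb - Tb)) / n|
          ≤ |P - Q| + |((Sa - Ta) * Sb + Ta * (Sb - Tb)) / n| := by
            rw [sub_eq_add_neg]
            exact (abs_add_le _ _).trans (by rw [abs_neg])
        _ ≤ 1 + 2 := add_le_add hPQ h1
        _ = 3 := by norm_num
    calc |(P - Q) - ((Sa - Ta) * Sb + Ta * (Sb - Tb)) / n| / ((n:ℝ) - 1)
        ≤ 3 / ((n:ℝ) - 1) := by gcongr
      _ ≤ 6 / n := by rw [div_le_div_iff₀ hn1R hn0]; nlinarith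
  refine ⟨main, ?_⟩
  calc (∑ a, ∑ b, |covFn X a b - covFn X' a b|)
      ≤ ∑ _a : Fin d, ∑ _b : Fin d, (6 / (n:ℝ)) := by
        apply Finset.sum_le_sum; intro a _
        apply Finset.sum_le_sum; intro b _
        exact main a b
    _ = d ^ 2 * (6 / n) := by simp [Finset.sum_const]; ring
    _ = 6 * d ^ 2 / n := by ring
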